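/- Let β̄, β, β* ∈ ℝ^d with β̄ ≠ 0 and β* ≠ 0, let S* = {j : β*_j ≠ 0} with |S*| ≤ s* and s* ≥ 1, and let s be an integer with s ≥ 2s*. Let Ŝ = supp(β, s) and I₁ = S* \ Ŝ. Define θ̄ = β̄/‖β̄‖₂, θ* = β*/‖β*‖₂, Δ = ⟨θ̄, θ*⟩, and ε̃ = 2‖β̄ − β‖_∞/‖β̄‖₂. Then ‖θ̄_{I₁}‖₂ ≤ √(s*/s)·√(1 − Δ²) + √s*·ε̃, where θ̄_{I₁} denotes the restriction of θ̄ to the coordinates in I₁. -/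
import Mathlib


open MeasureTheory ProbabilityTheory Real
open scoped ENNReal NNReal

noncomputable section

/-- Euclidean (ℓ²) norm of a vector in `Fin d → ℝ`. -/
def l2 {d : ℕ} (v : Fin d → ℝ) : ℝ := Real.sqrt (∑ j, v j ^ 2)

/-- Supremum (ℓ∞) norm. -/
def linf {d : ℕ} (v : Fin d → ℝ) : ℝ := ⨆ j, |v j|

/-- Number of nonzero entries (ℓ₀ "norm"). -/
def l0 {d : ℕ} (v : Fin d → ℝ) : ℕ := (Finset.univ.filter fun j => v j ≠ 0).card

/-- Euclidean inner product. -/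
def inp {d : ℕ} (u v : Fin d → ℝ) : ℝ := ∑ j, u j * v j

/-- The continuous linear map `v ↦ ⟨g, v⟩`; used to express gradients. -/
def dotCLM {d : ℕ} (g : Fin d → ℝ) : (Fin d → ℝ) →L[ℝ] ℝ :=
  ∑ j, g j • (ContinuousLinearMap.proj j)

/-- `X` is `ξ`-sub-exponential under `μ`: `E[exp (t (X - E X))] ≤ exp (ξ² t² / 2)` for `|t| < 1/ξ`. -/
def SubExpOn {α : Type*} [MeasurableSpace α] (μ : Measure α) (ξ : ℝ) (X : α → ℝ) : Prop :=
  ∀ t : ℝ, |t| < 1 / ξ →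
    ∫ a, Real.exp (t * (X a - ∫ a', X a' ∂μ)) ∂μ ≤ Real.exp (ξ ^ 2 * t ^ 2 / 2)

/-- `‖X‖_{ψ₂} = sup_{p ≥ 1} p^{-1/2} (E |X|^p)^{1/p} ≤ c`, stated pointwise in `p`. -/
def Psi2NormLe {α : Type*} [MeasurableSpace α] (μ : Measure α) (X : α → ℝ) (c : ℝ) : Prop :=
  ∀ p : ℝ, 1 ≤ p → p ^ (-(1 : ℝ) / 2) * (∫ a, |X a| ^ p ∂μ) ^ p⁻¹ ≤ c

/-- `‖X‖_{ψ₁} = sup_{p ≥ 1} p^{-1} (E |X|^p)^{1/p} ≤ c`, stated pointwise in `p`. -/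
def Psi1NormLe {α : Type*} [MeasurableSpace α] (μ : Measure α) (X : α → ℝ) (c : ℝ) : Prop :=
  ∀ p : ℝ, 1 ≤ p → p ^ (-(1 : ℝ)) * (∫ a, |X a| ^ p ∂μ) ^ p⁻¹ ≤ c

/-- `S` is a set of `s` indices attaining the `s` largest values of `|v j|`. -/
def IsTopIdx {d : ℕ} (v : Fin d → ℝ) (s : ℕ) (S : Finset (Fin d)) : Prop :=
  S.card = s ∧ ∀ i ∈ S, ∀ j ∉ S, |v j| ≤ |v i|

/-- Truncation of `v` to a set of coordinates `S`. -/
def trunc {d : ℕ} (v : Fin d → ℝ) (S : Finset (Fin d)) : Fin d → ℝ :=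
  fun j => if j ∈ S then v j else 0

/-- A canonical set of indices of the `s` largest values of `|v j|`. -/
def suppTop {d : ℕ} (v : Fin d → ℝ) (s : ℕ) : Finset (Fin d) :=
  (Finset.univ.filter fun i : Fin d => d - s ≤ (i : ℕ)).image (Tuple.sort fun j => |v j|)

/-- The `α`-trimmed mean: remove the `⌈α n⌉` largest and smallest values, average the rest. -/
def trmean {n : ℕ} (a : ℝ) (z : Fin n → ℝ) : ℝ :=
  (∑ i : Fin n,
      if ⌈a * n⌉₊ ≤ (i : ℕ) ∧ (i : ℕ) < n - ⌈a * n⌉₊ then z (Tuple.sort z i) else 0) /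
    ((n : ℝ) - 2 * ⌈a * n⌉₊)

/-- Coordinatewise `α`-trimmed mean of vector samples. -/
def dTrim {n d : ℕ} (a : ℝ) (z : Fin n → Fin d → ℝ) : Fin d → ℝ :=
  fun j => trmean a (fun i => z i j)

/-- Iterates of the trimmed gradient EM algorithm with sample-gradient map `g`,
corrupted samples `z`, trimming level `a`, step size `η` and sparsity level `s`. -/
def temIter {n d : ℕ} {E : Type*} (g : (Fin d → ℝ) → E → Fin d → ℝ)
    (z : Fin n → E) (a η : ℝ) (s : ℕ) (βinit : Fin d → ℝ) : ℕ → Fin d → ℝ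
  | 0 => trunc βinit (suppTop βinit s)
  | (t + 1) =>
      let βc := temIter g z a η s βinit t
      let βh := βc + η • dTrim a (fun i => g βc (z i))
      trunc βh (suppTop βh s)

open Classical in
/-- Number of indices where the corrupted samples differ from the clean ones. -/
def numDiff {n : ℕ} {E : Type*} (y z : Fin n → E) : ℕ :=
  (Finset.univ.filter fun i => z i ≠ y i).card

/-- Rademacher law on `ℝ`. -/
def rademacherLaw : Measure ℝ :=
  (1 / 2 : ℝ≥0∞) • Measure.dirac 1 + (1 / 2 : ℝ≥0∞) • Measure.dirac (-1)

/-- Law of `N(0, σ² I_d)` on `Fin d → ℝ`. -/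
def gaussPi (d : ℕ) (σ : ℝ) : Measure (Fin d → ℝ) :=
  Measure.pi fun _ => gaussianReal 0 (Real.toNNReal (σ ^ 2))

/-- Law of `Y = Z β* + V` for the Gaussian mixture model. -/
def gmmLaw {d : ℕ} (βs : Fin d → ℝ) (σ : ℝ) : Measure (Fin d → ℝ) :=
  (1 / 2 : ℝ≥0∞) • (gaussPi d σ).map (fun v => βs + v) +
    (1 / 2 : ℝ≥0∞) • (gaussPi d σ).map (fun v => -βs + v)

/-- GMM weight function `w_β`. -/
def wGMM {d : ℕ} (σ : ℝ) (β y : Fin d → ℝ) : ℝ :=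
  1 / (1 + Real.exp (-(inp β y) / σ ^ 2))

/-- GMM sample gradient `∇q(β;β)(y) = (2 w_β(y) - 1) y - β`. -/
def gradGMM {d : ℕ} (σ : ℝ) (β : Fin d → ℝ) (y : Fin d → ℝ) : Fin d → ℝ :=
  (2 * wGMM σ β y - 1) • y - β

/-- Joint law of `(X, Y)` in the mixture of regressions model. -/
def mrLaw {d : ℕ} (βs : Fin d → ℝ) (σ : ℝ) : Measure ((Fin d → ℝ) × ℝ) :=
  ((gaussPi d 1).prod ((gaussianReal 0 (Real.toNNReal (σ ^ 2))).prod rademacherLaw)).map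
    (fun p => (p.1, p.2.2 * inp βs p.1 + p.2.1))

/-- MRM weight function `w_β(x,y)`. -/
def wMRM {d : ℕ} (σ : ℝ) (β x : Fin d → ℝ) (y : ℝ) : ℝ :=
  1 / (1 + Real.exp (-(y * inp β x) / σ ^ 2))

/-- MRM sample gradient `∇q(β;β)(x,y) = (2 w_β(x,y) - 1) y x - x xᵀ β`. -/
def gradMRM {d : ℕ} (σ : ℝ) (β : Fin d → ℝ) (p : (Fin d → ℝ) × ℝ) : Fin d → ℝ :=
  ((2 * wMRM σ β p.1 p.2 - 1) * p.2) • p.1 - inp p.1 β • p.1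

/-- Bernoulli({1,0}) law on ℝ with `P(1) = 1 - pm`, `P(0) = pm` (missingness mask coordinate). -/
def bern01 (pm : ℝ) : Measure ℝ :=
  ENNReal.ofReal (1 - pm) • Measure.dirac 1 + ENNReal.ofReal pm • Measure.dirac 0

/-- Joint law of `(X, Y, Z)` in linear regression with covariates missing with probability `pm`. -/
def rmcLaw {d : ℕ} (βs : Fin d → ℝ) (σ pm : ℝ) :
    Measure ((Fin d → ℝ) × ℝ × (Fin d → ℝ)) :=
  ((gaussPi d 1).prod ((gaussianReal 0 (Real.toNNReal (σ ^ 2))).prod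
      (Measure.pi fun _ : Fin d => bern01 pm))).map
    (fun p => (p.1, inp βs p.1 + p.2.1, p.2.2))

/-- The vector `m_β(x^obs, y)` (written with mask `z` and full covariate `x`). -/
def mFun {d : ℕ} (σ : ℝ) (β x : Fin d → ℝ) (y : ℝ) (z : Fin d → ℝ) : Fin d → ℝ :=
  (z * x) + ((y - inp β (z * x)) / (σ ^ 2 + l2 ((1 - z) * β) ^ 2)) • ((1 - z) * β)

/-- `K_β(x^obs, y)` applied to a vector `w`. -/
def Kapply {d : ℕ} (σ : ℝ) (β x : Fin d → ℝ) (y : ℝ) (z : Fin d → ℝ)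
    (w : Fin d → ℝ) : Fin d → ℝ :=
  ((1 - z) * w) + inp (mFun σ β x y z) w • mFun σ β x y z -
    inp ((1 - z) * mFun σ β x y z) w • ((1 - z) * mFun σ β x y z)

/-- RMC sample gradient `∇q(β;β) = y m_β - K_β β`. -/
def gradRMC {d : ℕ} (σ : ℝ) (β : Fin d → ℝ)
    (p : (Fin d → ℝ) × ℝ × (Fin d → ℝ)) : Fin d → ℝ :=
  p.2.1 • mFun σ β p.1 p.2.1 p.2.2 - Kapply σ β p.1 p.2.1 p.2.2 β

end

noncomputable section

/-- GMM population map `G(β) = E[(2 w_β(Y) - 1) Y]`. -/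
def gmmG {d : ℕ} (σ : ℝ) (βs β : Fin d → ℝ) : Fin d → ℝ :=
  fun j => ∫ y, (2 * wGMM σ β y - 1) * y j ∂(gmmLaw βs σ)

/-- GMM population `Q(β; b) = ⟨G(b), β⟩ - (1/2)‖β‖₂²`. -/
def gmmQ {d : ℕ} (σ : ℝ) (βs β b : Fin d → ℝ) : ℝ :=
  inp (gmmG σ βs b) β - 1 / 2 * l2 β ^ 2

/-- MRM population map `G(β) = E[(2 w_β(X,Y) - 1) Y X]`. -/
def mrG {d : ℕ} (σ : ℝ) (βs β : Fin d → ℝ) : Fin d → ℝ :=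
  fun j => ∫ p, (2 * wMRM σ β p.1 p.2 - 1) * p.2 * p.1 j ∂(mrLaw βs σ)

/-- MRM population `Q(β; b) = ⟨G(b), β⟩ - (1/2)‖β‖₂²`. -/
def mrQ {d : ℕ} (σ : ℝ) (βs β b : Fin d → ℝ) : ℝ :=
  inp (mrG σ βs b) β - 1 / 2 * l2 β ^ 2

/-- RMC population `Q(β; b) = E[Y ⟨m_b, β⟩ - (1/2) βᵀ K_b β]`. -/
def rmcQ {d : ℕ} (σ pm : ℝ) (βs β b : Fin d → ℝ) : ℝ :=
  ∫ p, (p.2.1 * inp (mFun σ b p.1 p.2.1 p.2.2) β -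
    1 / 2 * inp β (Kapply σ b p.1 p.2.1 p.2.2 β)) ∂(rmcLaw βs σ pm)

/-- RMC population gradient `∇₁Q(β; b) = E[Y m_b - K_b β]`. -/
def rmcGrad1 {d : ℕ} (σ pm : ℝ) (βs β b : Fin d → ℝ) : Fin d → ℝ :=
  fun j => ∫ p, (p.2.1 • mFun σ b p.1 p.2.1 p.2.2 -
    Kapply σ b p.1 p.2.1 p.2.2 β) j ∂(rmcLaw βs σ pm)

end

set_option maxHeartbeats 800000 in
open Classical in
/-- bound on the mass of the normalized vector `θ̄ = β̄/‖β̄‖₂` on the true support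
coordinates missed by a top-`s` index set of `β`. -/
theorem missed_support_mass_bound (d sstar s : ℕ) (βs βbar β : Fin d → ℝ)
    (S : Finset (Fin d))
    (hbar : βbar ≠ 0) (hβs : βs ≠ 0)
    (hsupp : (Finset.univ.filter fun j => βs j ≠ 0).card ≤ sstar)
    (hsstar : 1 ≤ sstar) (hs : 2 * sstar ≤ s)
    (hS : IsTopIdx β s S) :
    l2 (trunc ((l2 βbar)⁻¹ • βbar) ((Finset.univ.filter fun j => βs j ≠ 0) \ S)) ≤
      Real.sqrt ((sstar : ℝ) / s) *
          Real.sqrt (1 - inp ((l2 βbar)⁻¹ • βbar) ((l2 βs)⁻¹ • βs) ^ 2) +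
        Real.sqrt sstar * (2 * linf (βbar - β) / l2 βbar) := by
  classical
  obtain ⟨j₀, hj₀⟩ : ∃ j, βbar j ≠ 0 := by
    by_contra h; push_neg at h; exact hbar (funext h)
  obtain ⟨j₁, hj₁⟩ : ∃ j, βs j ≠ 0 := by
    by_contra h; push_neg at h; exact hβs (funext h)
  have hsumbar : (0:ℝ) < ∑ j, βbar j ^ 2 :=
    lt_of_lt_of_le (pow_pos (abs_pos.2 hj₀) 2 |>.trans_le (by rw [sq_abs]))
      (Finset.single_le_sum (fun i _ => sq_nonneg (βbar i)) (Finset.mem_univ j₀))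
  have hsumβs : (0:ℝ) < ∑ j, βs j ^ 2 :=
    lt_of_lt_of_le (pow_pos (abs_pos.2 hj₁) 2 |>.trans_le (by rw [sq_abs]))
      (Finset.single_le_sum (fun i _ => sq_nonneg (βs i)) (Finset.mem_univ j₁))
  have hbpos : 0 < l2 βbar := Real.sqrt_pos.2 hsumbar
  have hcpos : 0 < l2 βs := Real.sqrt_pos.2 hsumβs
  have hb2 : l2 βbar ^ 2 = ∑ j, βbar j ^ 2 := Real.sq_sqrt hsumbar.le
  have hc2 : l2 βs ^ 2 = ∑ j, βs j ^ 2 := Real.sq_sqrt hsumβs.le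
  set f : Fin d → ℝ := fun j => (l2 βbar)⁻¹ * βbar j with hf_def
  set g : Fin d → ℝ := fun j => (l2 βs)⁻¹ * βs j with hg_def
  have hf1 : ∑ j, f j ^ 2 = 1 := by
    have h1 : ∑ j, f j ^ 2 = (l2 βbar)⁻¹ ^ 2 * ∑ j, βbar j ^ 2 := by
      rw [Finset.mul_sum]; exact Finset.sum_congr rfl fun i _ => by rw [hf_def]; ring
    rw [h1, ← hb2, inv_pow, inv_mul_cancel₀ (pow_ne_zero 2 hbpos.ne')]
  have hg1 : ∑ j, g j ^ 2 = 1 := by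
    have h1 : ∑ j, g j ^ 2 = (l2 βs)⁻¹ ^ 2 * ∑ j, βs j ^ 2 := by
      rw [Finset.mul_sum]; exact Finset.sum_congr rfl fun i _ => by rw [hg_def]; ring
    rw [h1, ← hc2, inv_pow, inv_mul_cancel₀ (pow_ne_zero 2 hcpos.ne')]
  set Δ : ℝ := inp ((l2 βbar)⁻¹ • βbar) ((l2 βs)⁻¹ • βs) with hΔ_def
  have hΔsum : Δ = ∑ j, f j * g j := by
    rw [hΔ_def]; unfold inp
    exact Finset.sum_congr rfl fun i _ => rfl
  set Sstar : Finset (Fin d) := Finset.univ.filter (fun j => βs j ≠ 0) with hSstar_def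
  set I₁ : Finset (Fin d) := Sstar \ S with hI₁_def
  set T : Finset (Fin d) := S \ Sstar with hT_def
  -- cardinality facts
  have e1 : T.card + (S ∩ Sstar).card = S.card := Finset.card_sdiff_add_card_inter S Sstar
  have e2 : I₁.card + (Sstar ∩ S).card = Sstar.card :=
    Finset.card_sdiff_add_card_inter Sstar S
  have e3 : (S ∩ Sstar).card = (Sstar ∩ S).card := by rw [Finset.inter_comm]
  have hScard : S.card = s := hS.1
  have hk_le : I₁.card ≤ sstar := by omega
  have hk_le_T : I₁.card ≤ T.card := by omega
  have hT_ne_card : 1 ≤ T.card := by omega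
  have hTne : T.Nonempty := Finset.card_pos.1 hT_ne_card
  -- residual bound
  have hexpand : ∑ i, (f i - Δ * g i) ^ 2 = 1 - Δ ^ 2 := by
    have h1 : ∑ i, (f i - Δ * g i) ^ 2
        = (∑ i, f i ^ 2) - 2 * Δ * (∑ i, f i * g i) + Δ ^ 2 * (∑ i, g i ^ 2) := by
      rw [Finset.mul_sum, Finset.mul_sum, ← Finset.sum_sub_distrib, ← Finset.sum_add_distrib]
      exact Finset.sum_congr rfl fun i _ => by ring
    rw [h1, hf1, hg1, ← hΔsum]; ring
  have hres : ∑ i ∈ Finset.univ \ Sstar, f i ^ 2 ≤ 1 - Δ ^ 2 := by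
    have h1 : ∑ i ∈ Finset.univ \ Sstar, f i ^ 2
        = ∑ i ∈ Finset.univ \ Sstar, (f i - Δ * g i) ^ 2 := by
      refine Finset.sum_congr rfl fun i hi => ?_
      have hi' : βs i = 0 := by
        rcases Finset.mem_sdiff.1 hi with ⟨-, hns⟩
        by_contra hne
        exact hns (by rw [hSstar_def]; exact Finset.mem_filter.2 ⟨Finset.mem_univ i, hne⟩)
      have : g i = 0 := by rw [hg_def]; simp [hi']
      rw [this]; ring
    rw [h1, ← hexpand]
    exact Finset.sum_le_sum_of_subset_of_nonneg (Finset.sdiff_subset)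
      (fun i _ _ => sq_nonneg _)
  -- min over T
  obtain ⟨i₀, hi₀T, hmin⟩ := T.exists_min_image (fun i => |f i|) hTne
  set m : ℝ := |f i₀| with hm_def
  have hm0 : 0 ≤ m := abs_nonneg _
  set e : ℝ := linf (βbar - β) with he_def
  have hle_e : ∀ j : Fin d, |βbar j - β j| ≤ e := by
    intro j
    have : |(βbar - β) j| ≤ ⨆ i, |(βbar - β) i| :=
      le_ciSup (f := fun i => |(βbar - β) i|) (Set.Finite.bddAbove (Set.finite_range _)) j
    simpa [linf, he_def] using this
  have he0 : 0 ≤ e := (abs_nonneg _).trans (hle_e j₀)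
  set ε : ℝ := 2 * e / l2 βbar with hε_def
  have hε0 : 0 ≤ ε := by
    rw [hε_def]; positivity
  -- key per-coordinate bound
  have hkey : ∀ j ∈ I₁, |f j| ≤ m + ε := by
    intro j hj
    have hjS : j ∉ S := (Finset.mem_sdiff.1 hj).2
    have hi₀S : i₀ ∈ S := (Finset.mem_sdiff.1 hi₀T).1
    have hββ : |β j| ≤ |β i₀| := hS.2 i₀ hi₀S j hjS
    have h1 : |βbar j| ≤ |βbar i₀| + 2 * e := by
      have a1 : |βbar j| ≤ |β j| + |βbar j - β j| := by
        have := abs_add_le (β j) (βbar j - β j); simpa using this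
      have a2 : |β i₀| ≤ |βbar i₀| + |βbar i₀ - β i₀| := by
        have := abs_sub_abs_le_abs_sub (β i₀) (βbar i₀)
        have h3 := abs_sub_comm (β i₀) (βbar i₀)
        linarith [abs_nonneg (βbar i₀ - β i₀), neg_abs_le (β i₀)]
      have := hle_e j
      have := hle_e i₀
      linarith
    have hfj : |f j| = (l2 βbar)⁻¹ * |βbar j| := by
      rw [hf_def]; rw [abs_mul, abs_of_pos (inv_pos.2 hbpos)]
    have hfi : |f i₀| = (l2 βbar)⁻¹ * |βbar i₀| := by
      rw [hf_def]; rw [abs_mul, abs_of_pos (inv_pos.2 hbpos)]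
    rw [hfj, hm_def, hfi, hε_def]
    rw [div_eq_mul_inv, mul_comm (2 * e)]
    calc (l2 βbar)⁻¹ * |βbar j| ≤ (l2 βbar)⁻¹ * (|βbar i₀| + 2 * e) := by
          exact mul_le_mul_of_nonneg_left h1 (inv_pos.2 hbpos).le
      _ = (l2 βbar)⁻¹ * |βbar i₀| + (l2 βbar)⁻¹ * (2 * e) := by ring
  -- sum bounds
  have hsumI : ∑ j ∈ I₁, f j ^ 2 ≤ (I₁.card : ℝ) * (m + ε) ^ 2 := by
    have := Finset.sum_le_card_nsmul I₁ (fun j => f j ^ 2) ((m + ε) ^ 2)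
      (fun j hj => by
        show f j ^ 2 ≤ (m + ε) ^ 2
        rw [← sq_abs (f j)]
        exact pow_le_pow_left₀ (abs_nonneg _) (hkey j hj) 2)
    simpa [nsmul_eq_mul] using this
  have hsumT : (T.card : ℝ) * m ^ 2 ≤ ∑ i ∈ T, f i ^ 2 := by
    have := Finset.card_nsmul_le_sum T (fun i => f i ^ 2) (m ^ 2)
      (fun i hi => by
        show m ^ 2 ≤ f i ^ 2
        rw [← sq_abs (f i)]
        exact pow_le_pow_left₀ hm0 (hmin i hi) 2)
    simpa [nsmul_eq_mul] using this
  have hTsub : T ⊆ Finset.univ \ Sstar :=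
    Finset.sdiff_subset_sdiff (Finset.subset_univ S) le_rfl
  have hTD : (T.card : ℝ) * m ^ 2 ≤ 1 - Δ ^ 2 :=
    hsumT.trans ((Finset.sum_le_sum_of_subset_of_nonneg hTsub
      (fun i _ _ => sq_nonneg _)).trans hres)
  -- the nonlinear cardinality inequality, over ℝ
  have hs0 : (0:ℝ) < s := by
    have : 1 ≤ s := le_trans (by omega) hs
    exact_mod_cast Nat.lt_of_lt_of_le Nat.zero_lt_one this
  have hks : (I₁.card : ℝ) * s ≤ (sstar : ℝ) * T.card := by
    have hA : (T.card : ℝ) + ((Sstar ∩ S).card : ℝ) = s := by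
      have : T.card + (Sstar ∩ S).card = s := by omega
      exact_mod_cast this
    have hkA : (I₁.card : ℝ) + ((Sstar ∩ S).card : ℝ) ≤ sstar := by
      have : I₁.card + (Sstar ∩ S).card ≤ sstar := by omega
      exact_mod_cast this
    have hkT : (I₁.card : ℝ) ≤ T.card := by exact_mod_cast hk_le_T
    have h5 : (I₁.card : ℝ) * ((Sstar ∩ S).card : ℝ) ≤ (T.card : ℝ) * ((sstar : ℝ) - I₁.card) :=
      mul_le_mul hkT (by linarith) (by positivity) (by positivity)
    nlinarith [h5, hA]
  have hkmD : (I₁.card : ℝ) * m ^ 2 ≤ (sstar / s) * (1 - Δ ^ 2) := by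
    rw [div_mul_eq_mul_div, le_div_iff₀ hs0]
    have h6 : (I₁.card : ℝ) * s * m ^ 2 ≤ (sstar : ℝ) * T.card * m ^ 2 :=
      mul_le_mul_of_nonneg_right hks (sq_nonneg m)
    have h7 : (sstar : ℝ) * (T.card * m ^ 2) ≤ (sstar : ℝ) * (1 - Δ ^ 2) :=
      mul_le_mul_of_nonneg_left hTD (by positivity)
    linarith [h6, h7]
  -- rewrite LHS
  have hLHS : l2 (trunc ((l2 βbar)⁻¹ • βbar) I₁) = Real.sqrt (∑ j ∈ I₁, f j ^ 2) := by
    unfold l2 trunc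
    congr 1
    rw [← Finset.sum_subset (Finset.subset_univ I₁)
      (fun x _ hx => by simp [hx])]
    exact Finset.sum_congr rfl fun j hj => by simp [hj, hf_def, l2]
  calc l2 (trunc ((l2 βbar)⁻¹ • βbar) I₁)
      = Real.sqrt (∑ j ∈ I₁, f j ^ 2) := hLHS
    _ ≤ Real.sqrt ((I₁.card : ℝ) * (m + ε) ^ 2) := Real.sqrt_le_sqrt hsumI
    _ = Real.sqrt (I₁.card : ℝ) * (m + ε) := by
        rw [Real.sqrt_mul (by positivity), Real.sqrt_sq (by positivity)]
    _ = Real.sqrt (I₁.card : ℝ) * m + Real.sqrt (I₁.card : ℝ) * ε := by ring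
    _ ≤ Real.sqrt ((sstar : ℝ) / s) * Real.sqrt (1 - Δ ^ 2) + Real.sqrt (sstar : ℝ) * ε := by
        gcongr ?_ + ?_
        · have h1 : Real.sqrt (I₁.card : ℝ) * m = Real.sqrt ((I₁.card : ℝ) * m ^ 2) := by
            rw [Real.sqrt_mul (by positivity), Real.sqrt_sq hm0]
          rw [h1, ← Real.sqrt_mul (by positivity : (0:ℝ) ≤ (sstar : ℝ) / s)]
          exact Real.sqrt_le_sqrt hkmD
        · exact mul_le_mul_of_nonneg_right
            (Real.sqrt_le_sqrt (by exact_mod_cast hk_le)) hε0
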